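/- Let A ∈ R^{m×N} have entries A_{j,k} = ±1 and suppose (a) |∑_{j=1}^m A_{j,k}A_{j,k'}| ≤ κ√m for all distinct k, k' and (b) |∑_{j=1}^m A_{j,k}A_{j,k'}A_{j,ℓ}A_{j,ℓ'}| ≤ κ√m for all distinct k, k', ℓ, ℓ'. Then for any δ ∈ (0,1), if m ≥ κ² δ^{−2} s⁴, then for every s-sparse x ∈ R^N, ||Ax||_4^4 ≤ 3(1+δ) m ||x||_2^4. -/

import Mathlib

set_option maxHeartbeats 1000000 in
/-- For a `±1` matrix satisfying conditions (a) and (b), if `m ≥ κ² δ⁻² s⁴` then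
`‖Ax‖₄⁴ ≤ 3(1+δ) m ‖x‖₂⁴` for all `s`-sparse `x`. -/
theorem stmt9 (m N s : ℕ) (κ δ : ℝ) (hκ : 0 < κ) (hδ : δ ∈ Set.Ioo (0 : ℝ) 1)
    (A : Matrix (Fin m) (Fin N) ℝ) (hA : ∀ j k, A j k = 1 ∨ A j k = -1)
    (ha : ∀ k k' : Fin N, k ≠ k' → |∑ j, A j k * A j k'| ≤ κ * Real.sqrt m)
    (hb : ∀ k k' l l' : Fin N, k ≠ k' → k ≠ l → k ≠ l' → k' ≠ l → k' ≠ l' → l ≠ l' →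
      |∑ j, A j k * A j k' * A j l * A j l'| ≤ κ * Real.sqrt m)
    (hm : (m : ℝ) ≥ κ ^ 2 / δ ^ 2 * s ^ 4)
    (x : Fin N → ℝ) (hx : {k | x k ≠ 0}.ncard ≤ s) :
    ∑ j, (A.mulVec x j) ^ 4 ≤ 3 * (1 + δ) * m * (∑ k, x k ^ 2) ^ 2 := by
  obtain ⟨hδ0, hδ1⟩ := hδ
  have hsq : ∀ j k, A j k * A j k = 1 := fun j k => by
    rcases hA j k with h | h <;> rw [h] <;> norm_num
  -- Step 1: expansion
  have expand : ∑ j, (A.mulVec x j) ^ 4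
      = ∑ k, ∑ k', ∑ l, ∑ l',
          (∑ j, A j k * A j k' * A j l * A j l') * (x k * x k' * x l * x l') := by
    have h1 : ∀ j, (A.mulVec x j) ^ 4
        = ∑ k, ∑ k', ∑ l, ∑ l',
            (A j k * A j k' * A j l * A j l') * (x k * x k' * x l * x l') := by
      intro j
      show (∑ k, A j k * x k) ^ 4 = _
      simp only [show (4:ℕ) = 1+1+1+1 from rfl, pow_succ, pow_zero, one_mul,
        Finset.sum_mul, Finset.mul_sum]
      exact Finset.sum_congr rfl fun k _ => Finset.sum_congr rfl fun k' _ =>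
        Finset.sum_congr rfl fun l _ => Finset.sum_congr rfl fun l' _ => by ring
    rw [Finset.sum_congr rfl fun j _ => h1 j]
    rw [Finset.sum_comm]
    refine Finset.sum_congr rfl fun k _ => ?_
    rw [Finset.sum_comm]
    refine Finset.sum_congr rfl fun k' _ => ?_
    rw [Finset.sum_comm]
    refine Finset.sum_congr rfl fun l _ => ?_
    rw [Finset.sum_comm]
    exact Finset.sum_congr rfl fun l' _ => by rw [Finset.sum_mul]
  -- Step 2: bound on T for non-paired quadruples
  have key : ∀ k k' l l' : Fin N, ¬(k = k' ∧ l = l') → ¬(k = l ∧ k' = l') →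
      ¬(k = l' ∧ k' = l) →
      |∑ j, A j k * A j k' * A j l * A j l'| ≤ κ * Real.sqrt m := by
    intro k k' l l' h1 h2 h3
    by_cases e1 : k = k'
    · subst e1
      have hll : l ≠ l' := fun h => h1 ⟨rfl, h⟩
      have : ∀ j, A j k * A j k * A j l * A j l' = A j l * A j l' := fun j => by
        rw [show A j k * A j k * A j l * A j l' = (A j k * A j k) * (A j l * A j l') from
          by ring, hsq, one_mul]
      rw [Finset.sum_congr rfl fun j _ => this j]
      exact ha l l' hll
    by_cases e2 : k = l
    · subst e2
      have h : k' ≠ l' := fun h => h2 ⟨rfl, h⟩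
      have : ∀ j, A j k * A j k' * A j k * A j l' = A j k' * A j l' := fun j => by
        rw [show A j k * A j k' * A j k * A j l' = (A j k * A j k) * (A j k' * A j l') from
          by ring, hsq, one_mul]
      rw [Finset.sum_congr rfl fun j _ => this j]
      exact ha k' l' h
    by_cases e3 : k = l'
    · subst e3
      have h : k' ≠ l := fun h => h3 ⟨rfl, h⟩
      have : ∀ j, A j k * A j k' * A j l * A j k = A j k' * A j l := fun j => by
        rw [show A j k * A j k' * A j l * A j k = (A j k * A j k) * (A j k' * A j l) from
          by ring, hsq, one_mul]
      rw [Finset.sum_congr rfl fun j _ => this j]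
      exact ha k' l h
    by_cases e4 : k' = l
    · subst e4
      have h : k ≠ l' := fun h => h3 ⟨h, rfl⟩
      have : ∀ j, A j k * A j k' * A j k' * A j l' = A j k * A j l' := fun j => by
        rw [show A j k * A j k' * A j k' * A j l' = (A j k' * A j k') * (A j k * A j l') from
          by ring, hsq, one_mul]
      rw [Finset.sum_congr rfl fun j _ => this j]
      exact ha k l' h
    by_cases e5 : k' = l'
    · subst e5
      have h : k ≠ l := fun h => h2 ⟨h, rfl⟩
      have : ∀ j, A j k * A j k' * A j l * A j k' = A j k * A j l := fun j => by
        rw [show A j k * A j k' * A j l * A j k' = (A j k' * A j k') * (A j k * A j l) from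
          by ring, hsq, one_mul]
      rw [Finset.sum_congr rfl fun j _ => this j]
      exact ha k l h
    by_cases e6 : l = l'
    · subst e6
      have : ∀ j, A j k * A j k' * A j l * A j l = A j k * A j k' := fun j => by
        rw [show A j k * A j k' * A j l * A j l = (A j l * A j l) * (A j k * A j k') from
          by ring, hsq, one_mul]
      rw [Finset.sum_congr rfl fun j _ => this j]
      exact ha k k' e1
    · exact hb k k' l l' e1 e2 e3 e4 e5 e6
  -- Value of T on paired quadruples
  have Tval : ∀ k k' l l' : Fin N, (k = k' ∧ l = l') ∨ (k = l ∧ k' = l') ∨ (k = l' ∧ k' = l) →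
      (∑ j, A j k * A j k' * A j l * A j l') = m := by
    rintro k k' l l' (⟨h1, h2⟩ | ⟨h1, h2⟩ | ⟨h1, h2⟩)
    · subst h1; subst h2
      have e : ∀ j : Fin m, A j k * A j k * A j l * A j l = 1 := fun j => by
        rw [show A j k * A j k * A j l * A j l = (A j k * A j k) * (A j l * A j l) from by
          ring, hsq, hsq, one_mul]
      rw [Finset.sum_congr rfl fun j _ => e j]
      simp
    · subst h1; subst h2
      have e : ∀ j : Fin m, A j k * A j k' * A j k * A j k' = 1 := fun j => by
        rw [show A j k * A j k' * A j k * A j k' = (A j k * A j k) * (A j k' * A j k') from by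
          ring, hsq, hsq, one_mul]
      rw [Finset.sum_congr rfl fun j _ => e j]
      simp
    · subst h1; subst h2
      have e : ∀ j : Fin m, A j k * A j k' * A j k' * A j k = 1 := fun j => by
        rw [show A j k * A j k' * A j k' * A j k = (A j k * A j k) * (A j k' * A j k') from by
          ring, hsq, hsq, one_mul]
      rw [Finset.sum_congr rfl fun j _ => e j]
      simp
  -- pointwise nonnegativity of diagonal if-terms
  have nn1 : ∀ k k' l l' : Fin N,
      (0:ℝ) ≤ if k = k' ∧ l = l' then (m:ℝ) * (x k * x k' * x l * x l') else 0 := by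
    intro k k' l l'
    split
    · rename_i h; obtain ⟨h1, h2⟩ := h; subst h1; subst h2
      have := sq_nonneg (x k * x l)
      have hm0 : (0:ℝ) ≤ (m:ℝ) := Nat.cast_nonneg m
      nlinarith
    · exact le_refl 0
  have nn2 : ∀ k k' l l' : Fin N,
      (0:ℝ) ≤ if k = l ∧ k' = l' then (m:ℝ) * (x k * x k' * x l * x l') else 0 := by
    intro k k' l l'
    split
    · rename_i h; obtain ⟨h1, h2⟩ := h; subst h1; subst h2
      have := sq_nonneg (x k * x k')
      have hm0 : (0:ℝ) ≤ (m:ℝ) := Nat.cast_nonneg m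
      nlinarith
    · exact le_refl 0
  have nn3 : ∀ k k' l l' : Fin N,
      (0:ℝ) ≤ if k = l' ∧ k' = l then (m:ℝ) * (x k * x k' * x l * x l') else 0 := by
    intro k k' l l'
    split
    · rename_i h; obtain ⟨h1, h2⟩ := h; subst h1; subst h2
      have := sq_nonneg (x k * x k')
      have hm0 : (0:ℝ) ≤ (m:ℝ) := Nat.cast_nonneg m
      nlinarith
    · exact le_refl 0
  -- pointwise bound
  have pt : ∀ k k' l l' : Fin N,
      (∑ j, A j k * A j k' * A j l * A j l') * (x k * x k' * x l * x l')
      ≤ (if k = k' ∧ l = l' then (m:ℝ) * (x k * x k' * x l * x l') else 0)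
        + (if k = l ∧ k' = l' then (m:ℝ) * (x k * x k' * x l * x l') else 0)
        + (if k = l' ∧ k' = l then (m:ℝ) * (x k * x k' * x l * x l') else 0)
        + κ * Real.sqrt m * (|x k| * |x k'| * |x l| * |x l'|) := by
    intro k k' l l'
    have hnn : (0:ℝ) ≤ κ * Real.sqrt m * (|x k| * |x k'| * |x l| * |x l'|) := by positivity
    by_cases hp : (k = k' ∧ l = l') ∨ (k = l ∧ k' = l') ∨ (k = l' ∧ k' = l)
    · rw [Tval k k' l l' hp]
      rcases hp with h | h | h
      · rw [if_pos h]
        have := nn2 k k' l l'; have := nn3 k k' l l'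
        linarith
      · rw [if_pos h]
        have := nn1 k k' l l'; have := nn3 k k' l l'
        linarith
      · rw [if_pos h]
        have := nn1 k k' l l'; have := nn2 k k' l l'
        linarith
    · push_neg at hp
      obtain ⟨hp1, hp2, hp3⟩ := hp
      have hp1' : ¬(k = k' ∧ l = l') := fun h => hp1 h.1 h.2
      have hp2' : ¬(k = l ∧ k' = l') := fun h => hp2 h.1 h.2
      have hp3' : ¬(k = l' ∧ k' = l) := fun h => hp3 h.1 h.2
      rw [if_neg hp1', if_neg hp2', if_neg hp3', zero_add, zero_add, zero_add]
      calc (∑ j, A j k * A j k' * A j l * A j l') * (x k * x k' * x l * x l')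
          ≤ |(∑ j, A j k * A j k' * A j l * A j l') * (x k * x k' * x l * x l')| :=
            le_abs_self _
        _ = |∑ j, A j k * A j k' * A j l * A j l'| * (|x k| * |x k'| * |x l| * |x l'|) := by
            rw [abs_mul, abs_mul, abs_mul, abs_mul]
        _ ≤ κ * Real.sqrt m * (|x k| * |x k'| * |x l| * |x l'|) := by
            apply mul_le_mul_of_nonneg_right (key k k' l l' hp1' hp2' hp3')
            positivity
  -- sum the pointwise bound
  have main : ∑ j, (A.mulVec x j) ^ 4
      ≤ (∑ k, ∑ k', ∑ l, ∑ l', if k = k' ∧ l = l' then (m:ℝ) * (x k * x k' * x l * x l') else 0)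
        + (∑ k, ∑ k', ∑ l, ∑ l', if k = l ∧ k' = l' then (m:ℝ) * (x k * x k' * x l * x l') else 0)
        + (∑ k, ∑ k', ∑ l, ∑ l', if k = l' ∧ k' = l then (m:ℝ) * (x k * x k' * x l * x l') else 0)
        + (∑ k, ∑ k', ∑ l, ∑ l', κ * Real.sqrt m * (|x k| * |x k'| * |x l| * |x l'|)) := by
    rw [expand]
    simp only [← Finset.sum_add_distrib]
    exact Finset.sum_le_sum fun k _ => Finset.sum_le_sum fun k' _ =>
      Finset.sum_le_sum fun l _ => Finset.sum_le_sum fun l' _ => pt k k' l l'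
  -- compute the three diagonal sums
  have d1 : (∑ k, ∑ k', ∑ l, ∑ l', if k = k' ∧ l = l' then (m:ℝ) * (x k * x k' * x l * x l') else 0)
      = (m:ℝ) * (∑ k, x k ^ 2) ^ 2 := by
    simp [ite_and, Finset.sum_ite_eq, Finset.mul_sum, Finset.sum_mul]
    ring_nf
    rw [sq, Finset.sum_mul_sum, Finset.mul_sum]
    exact Finset.sum_congr rfl fun _ _ => by
      rw [Finset.mul_sum]; exact Finset.sum_congr rfl fun _ _ => by ring
  have d2 : (∑ k, ∑ k', ∑ l, ∑ l', if k = l ∧ k' = l' then (m:ℝ) * (x k * x k' * x l * x l') else 0)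
      = (m:ℝ) * (∑ k, x k ^ 2) ^ 2 := by
    simp [ite_and, Finset.sum_ite_eq, Finset.mul_sum, Finset.sum_mul]
    ring_nf
    rw [sq, Finset.sum_mul_sum, Finset.mul_sum]
    exact Finset.sum_congr rfl fun _ _ => by
      rw [Finset.mul_sum]; exact Finset.sum_congr rfl fun _ _ => by ring
  have d3 : (∑ k, ∑ k', ∑ l, ∑ l', if k = l' ∧ k' = l then (m:ℝ) * (x k * x k' * x l * x l') else 0)
      = (m:ℝ) * (∑ k, x k ^ 2) ^ 2 := by
    simp [ite_and, Finset.sum_ite_eq, Finset.mul_sum, Finset.sum_mul]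
    ring_nf
    rw [sq, Finset.sum_mul_sum, Finset.mul_sum]
    exact Finset.sum_congr rfl fun _ _ => by
      rw [Finset.mul_sum]; exact Finset.sum_congr rfl fun _ _ => by ring
  -- the off-diagonal sum
  have exp4 : ∀ f : Fin N → ℝ,
      (∑ k, f k) ^ 4 = ∑ k, ∑ k', ∑ l, ∑ l', f k * f k' * f l * f l' := by
    intro f
    simp only [show (4:ℕ) = 1+1+1+1 from rfl, pow_succ, pow_zero, one_mul,
      Finset.sum_mul, Finset.mul_sum]
    exact Finset.sum_congr rfl fun k _ => Finset.sum_congr rfl fun k' _ =>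
      Finset.sum_congr rfl fun l _ => Finset.sum_congr rfl fun l' _ => by ring
  have d4 : (∑ k, ∑ k', ∑ l, ∑ l', κ * Real.sqrt m * (|x k| * |x k'| * |x l| * |x l'|))
      = κ * Real.sqrt m * (∑ k, |x k|) ^ 4 := by
    rw [exp4 fun k => |x k|]
    simp only [Finset.mul_sum]
  -- Cauchy–Schwarz on the support
  have hL2 : (∑ k, |x k|) ^ 2 ≤ (s:ℝ) * ∑ k, x k ^ 2 := by
    set S : Finset (Fin N) := Finset.univ.filter fun k => x k ≠ 0 with hS
    have hcard : S.card ≤ s := by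
      have : {k | x k ≠ 0}.ncard = S.card := by
        rw [hS]
        rw [Set.ncard_eq_toFinset_card']
        congr 1
        ext k
        simp
      omega
    have hsum : ∑ k, |x k| = ∑ k ∈ S, |x k| := by
      rw [hS]
      rw [Finset.sum_filter_of_ne]
      intro k _ h h0
      exact h (by rw [h0]; simp)
    rw [hsum]
    calc (∑ k ∈ S, |x k|) ^ 2 ≤ S.card * ∑ k ∈ S, |x k| ^ 2 :=
          sq_sum_le_card_mul_sum_sq
      _ ≤ (s:ℝ) * ∑ k, x k ^ 2 := by
          apply mul_le_mul
          · exact_mod_cast hcard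
          · simp only [sq_abs]
            exact Finset.sum_le_sum_of_subset_of_nonneg (Finset.subset_univ S)
              fun k _ _ => sq_nonneg (x k)
          · positivity
          · positivity
  -- arithmetic finish
  have hsm : Real.sqrt m * Real.sqrt m = m := Real.mul_self_sqrt (Nat.cast_nonneg m)
  have h1 : κ * (s:ℝ) ^ 2 / δ ≤ Real.sqrt m := by
    have h0 : Real.sqrt (κ^2/δ^2 * (s:ℝ)^4) ≤ Real.sqrt m := Real.sqrt_le_sqrt hm
    rwa [show κ^2/δ^2*(s:ℝ)^4 = (κ*(s:ℝ)^2/δ)^2 from by ring,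
      Real.sqrt_sq (by positivity)] at h0
  have hks : κ * Real.sqrt m * (s:ℝ) ^ 2 ≤ δ * m := by
    have h2 := mul_le_mul_of_nonneg_right h1 (Real.sqrt_nonneg m)
    rw [hsm] at h2
    calc κ * Real.sqrt m * (s:ℝ)^2 = δ * (κ * (s:ℝ)^2 / δ * Real.sqrt m) := by
          field_simp
      _ ≤ δ * m := by nlinarith
  have hBnn : (0:ℝ) ≤ (∑ k, x k ^ 2) ^ 2 := sq_nonneg _
  have hLnn : (0:ℝ) ≤ ∑ k, |x k| := Finset.sum_nonneg fun k _ => abs_nonneg (x k)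
  have hL4 : (∑ k, |x k|) ^ 4 ≤ (s:ℝ)^2 * (∑ k, x k ^ 2) ^ 2 := by
    calc (∑ k, |x k|) ^ 4 = ((∑ k, |x k|) ^ 2) ^ 2 := by ring
      _ ≤ ((s:ℝ) * ∑ k, x k ^ 2) ^ 2 := by
          apply pow_le_pow_left₀ (sq_nonneg _) hL2 2
      _ = (s:ℝ)^2 * (∑ k, x k ^ 2) ^ 2 := by ring
  have hoff : κ * Real.sqrt m * (∑ k, |x k|) ^ 4 ≤ δ * m * (∑ k, x k ^ 2) ^ 2 := by
    calc κ * Real.sqrt m * (∑ k, |x k|) ^ 4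
        ≤ κ * Real.sqrt m * ((s:ℝ)^2 * (∑ k, x k ^ 2) ^ 2) := by
          apply mul_le_mul_of_nonneg_left hL4 (by positivity)
      _ = (κ * Real.sqrt m * (s:ℝ)^2) * (∑ k, x k ^ 2) ^ 2 := by ring
      _ ≤ δ * m * (∑ k, x k ^ 2) ^ 2 := mul_le_mul_of_nonneg_right hks hBnn
  rw [d1, d2, d3, d4] at main
  have hδmB : (0:ℝ) ≤ δ * m * (∑ k, x k ^ 2) ^ 2 := by positivity
  have hre : 3 * (1 + δ) * (m:ℝ) * (∑ k, x k ^ 2) ^ 2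
      = ((m:ℝ) * (∑ k, x k ^ 2) ^ 2 + (m:ℝ) * (∑ k, x k ^ 2) ^ 2
          + (m:ℝ) * (∑ k, x k ^ 2) ^ 2) + (δ * m * (∑ k, x k ^ 2) ^ 2)
        + 2 * (δ * m * (∑ k, x k ^ 2) ^ 2) := by ring
  rw [hre]
  linarith [main, hoff, hδmB]
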